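/- For every ε ∈ (0, π) there exists a constant K > 0 such that |E(z)| = |F(z)·T(z)^{p−1}| ≤ K/(1 + |z|) for all z ∈ ℂ_ε. -/

import Mathlib

/-- `R_p = (p-1)^(p-1) / p^p`. -/
noncomputable def Rp (p : ℕ) : ℝ :=
  ((p - 1 : ℕ) : ℝ) ^ (p - 1) / (p : ℝ) ^ p

/-- The cut plane `Ω_p = ℂ ∖ [R_p, ∞)`. -/
noncomputable def cutPlane (p : ℕ) : Set ℂ :=
  (Complex.ofReal '' Set.Ici (Rp p))ᶜ

/-- The open sector `ℂ_ε = {z : |arg z| > ε}` (principal argument). -/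
def sector (ε : ℝ) : Set ℂ := {z : ℂ | ε < |Complex.arg z|}

/-- Let `T` be analytic on `Ω_p` with `z T(z)^p − T(z) + 1 = 0` and
`1 − p z T(z)^{p−1} ≠ 0` there; set `F(z) = 1/(1 − p z T(z)^{p−1})` and
`E(z) = T(z)^{p−1} F(z)`.  Then for every `ε ∈ (0, π)` there is `K > 0` with
`|E(z)| ≤ K/(1 + |z|)` for all `z ∈ ℂ_ε`. -/
theorem fussCatalan_E_decay (p : ℕ) (hp : 2 ≤ p) (T : ℂ → ℂ)
    (hT : AnalyticOnNhd ℂ T (cutPlane p))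
    (heq : ∀ z ∈ cutPlane p, z * T z ^ p - T z + 1 = 0)
    (hne : ∀ z ∈ cutPlane p, 1 - (p : ℂ) * z * T z ^ (p - 1) ≠ 0)
    (ε : ℝ) (hε : ε ∈ Set.Ioo 0 Real.pi) :
    ∃ K : ℝ, 0 < K ∧ ∀ z ∈ sector ε,
      ‖T z ^ (p - 1) * (1 - (p : ℂ) * z * T z ^ (p - 1))⁻¹‖ ≤ K / (1 + ‖z‖) := by
  obtain ⟨hε0, hεπ⟩ := hε
  set q := p - 1 with hq
  have hp1 : 1 ≤ q := by omega
  have hpq : p = q + 1 := by omega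
  have hRpos : 0 < Rp p := by
    have h1 : (0:ℝ) < ((p - 1 : ℕ) : ℝ) := by
      have : 0 < p - 1 := by omega
      exact_mod_cast this
    have h2 : (0:ℝ) < (p:ℝ) := by
      have : 0 < p := by omega
      exact_mod_cast this
    exact div_pos (pow_pos h1 _) (pow_pos h2 _)
  -- the sector is inside the cut plane
  have hsec : sector ε ⊆ cutPlane p := by
    intro z hz
    simp only [cutPlane, Set.mem_compl_iff]
    rintro ⟨x, hx, rfl⟩
    have hx0 : (0:ℝ) ≤ x := le_trans hRpos.le hx
    have harg : Complex.arg x = 0 := Complex.arg_ofReal_of_nonneg hx0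
    simp only [sector, Set.mem_setOf_eq, harg, abs_zero] at hz
    linarith
  -- the closure of the sector is inside the cut plane
  have hclos : closure (sector ε) ⊆ cutPlane p := by
    intro z hz
    simp only [cutPlane, Set.mem_compl_iff]
    rintro ⟨x, hx, rfl⟩
    have hxpos : 0 < x := lt_of_lt_of_le hRpos hx
    have hslit : (x:ℂ) ∈ Complex.slitPlane := by
      left; simpa using hxpos
    have hc : ContinuousAt (fun w : ℂ => |Complex.arg w|) (x:ℂ) :=
      continuous_abs.continuousAt.comp (Complex.continuousAt_arg hslit)
    have harg : |Complex.arg (x:ℂ)| = 0 := by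
      simp [Complex.arg_ofReal_of_nonneg hxpos.le]
    have hev : ∀ᶠ w in nhds (x:ℂ), |Complex.arg w| < ε := by
      have ht : Filter.Tendsto (fun w : ℂ => |Complex.arg w|) (nhds (x:ℂ)) (nhds 0) :=
        harg ▸ hc
      exact ht.eventually_lt_const hε0
    have hfreq : ∃ᶠ w in nhds (x:ℂ), w ∈ sector ε := mem_closure_iff_frequently.mp hz
    obtain ⟨w, hw1, hw2⟩ := (hfreq.and_eventually hev).exists
    exact absurd hw2 (not_lt.mpr hw1.le)
  -- T never vanishes on the cut plane
  have hT0 : ∀ z ∈ cutPlane p, T z ≠ 0 := by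
    intro z hz h0
    have h := heq z hz
    rw [h0] at h
    rw [zero_pow (by omega : p ≠ 0)] at h
    simp at h
  -- T is bounded by 2 for ‖z‖ ≥ 1
  have hTbound : ∀ z ∈ cutPlane p, 1 ≤ ‖z‖ → ‖T z‖ ≤ 2 := by
    intro z hz hz1
    by_contra hcon
    push_neg at hcon
    have hzw : z * T z ^ p = T z - 1 := by linear_combination heq z hz
    have hnorm : ‖z‖ * ‖T z‖ ^ p = ‖T z - 1‖ := by
      rw [← norm_pow, ← norm_mul, hzw]
    set t := ‖T z‖ with htdef
    have ht0 : (0:ℝ) < t := by linarith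
    have hle : ‖T z - 1‖ ≤ t + 1 := by
      calc ‖T z - 1‖ ≤ ‖T z‖ + ‖(1:ℂ)‖ := norm_sub_le _ _
        _ = t + 1 := by rw [norm_one]
    have h2q : (2:ℝ) ≤ 2 ^ q := by
      calc (2:ℝ) = 2 ^ 1 := (pow_one 2).symm
        _ ≤ 2 ^ q := pow_le_pow_right₀ (by norm_num) hp1
    have htq : (2:ℝ) ^ q ≤ t ^ q := pow_le_pow_left₀ (by norm_num) hcon.le q
    have hpp : t ^ p = t ^ q * t := by rw [hpq, pow_succ]
    have h5 : t ^ p ≤ ‖z‖ * t ^ p := le_mul_of_one_le_left (by positivity) hz1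
    have h6 : 2 * t ≤ t ^ q * t :=
      mul_le_mul_of_nonneg_right (le_trans h2q htq) ht0.le
    linarith [hnorm, hle]
  -- the denominator p - (p-1)T is bounded below by 1/2 for ‖z‖ ≥ 1
  have hDbound : ∀ z ∈ cutPlane p, 1 ≤ ‖z‖ →
      (1/2 : ℝ) ≤ ‖(p:ℂ) - ((p:ℂ) - 1) * T z‖ := by
    intro z hz hz1
    by_contra hcon
    push_neg at hcon
    set w := T z with hw
    have hzw : z * w ^ p = w - 1 := by linear_combination heq z hz
    have hp2 : (2:ℝ) ≤ (p:ℝ) := by exact_mod_cast hp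
    have hsp : (0:ℝ) < (p:ℝ) - 1 := by linarith
    set s : ℝ := 1 / ((p:ℝ) - 1) with hs
    have hs0 : 0 < s := by positivity
    have hs1 : s ≤ 1 := by
      rw [hs, div_le_one hsp]; linarith
    have hsmul : s * ((p:ℝ) - 1) = 1 := by
      rw [hs]; field_simp
    set c : ℂ := (p:ℂ) / ((p:ℂ) - 1) with hc
    have hpc1 : ((p:ℂ) - 1) ≠ 0 := by
      intro h
      have : (p:ℂ) = 1 := by linear_combination h
      have : (p:ℝ) = 1 := by exact_mod_cast this
      linarith
    have hcc : ((p:ℂ) - 1) * c = (p:ℂ) := by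
      rw [hc]; field_simp
    have hfac : (p:ℂ) - ((p:ℂ) - 1) * w = ((p:ℂ) - 1) * (c - w) := by
      rw [mul_sub, hcc]
    have hnp1 : ‖(p:ℂ) - 1‖ = (p:ℝ) - 1 := by
      have : (p:ℂ) - 1 = (((p:ℝ) - 1 : ℝ) : ℂ) := by push_cast; ring
      rw [this, Complex.norm_real, Real.norm_eq_abs, abs_of_pos hsp]
    have hcnorm : ‖(p:ℂ) - ((p:ℂ) - 1) * w‖ = ((p:ℝ) - 1) * ‖c - w‖ := by
      rw [hfac, norm_mul, hnp1]
    have hcw : ‖c - w‖ < s / 2 := by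
      rw [hcnorm] at hcon
      nlinarith [norm_nonneg (c - w)]
    have hcreal : c = (((p:ℝ) / ((p:ℝ) - 1) : ℝ) : ℂ) := by
      rw [hc]; push_cast; ring
    have hrc : (p:ℝ) / ((p:ℝ) - 1) = 1 + s := by
      rw [hs]; field_simp; ring
    have hcval : c = ((1 + s : ℝ) : ℂ) := by rw [hcreal, hrc]
    have hcn : ‖c‖ = 1 + s := by
      rw [hcval, Complex.norm_real, Real.norm_eq_abs, abs_of_pos (by linarith)]
    have hc1 : ‖c - 1‖ = s := by
      have : c - 1 = ((s : ℝ) : ℂ) := by rw [hcval]; push_cast; ring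
      rw [this, Complex.norm_real, Real.norm_eq_abs, abs_of_pos hs0]
    have hwlow : 1 + s / 2 ≤ ‖w‖ := by
      have h := norm_sub_norm_le c w
      rw [hcn] at h
      linarith [hcw]
    have hw1 : ‖w - 1‖ ≤ 3 * s / 2 := by
      calc ‖w - 1‖ = ‖(w - c) + (c - 1)‖ := by ring_nf
        _ ≤ ‖w - c‖ + ‖c - 1‖ := norm_add_le _ _
        _ = ‖c - w‖ + s := by rw [norm_sub_rev, hc1]
        _ ≤ 3 * s / 2 := by linarith
    have hbern : 1 + (p:ℝ) * (s / 2) ≤ (1 + s / 2) ^ p :=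
      one_add_mul_le_pow (by linarith) p
    have hwp : (1 + s / 2) ^ p ≤ ‖w‖ ^ p :=
      pow_le_pow_left₀ (by linarith) hwlow p
    have hnorm : ‖z‖ * ‖w‖ ^ p = ‖w - 1‖ := by
      rw [← norm_pow, ← norm_mul, hzw]
    have h5 : ‖w‖ ^ p ≤ ‖z‖ * ‖w‖ ^ p := le_mul_of_one_le_left (by positivity) hz1
    have hps : (p:ℝ) * s = 1 + s := by linear_combination hsmul
    nlinarith
  -- continuity of E on the cut plane
  have hcont : ContinuousOn (fun z => T z ^ q * (1 - (p:ℂ) * z * T z ^ q)⁻¹)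
      (cutPlane p) := by
    have hTc : ContinuousOn T (cutPlane p) := hT.continuousOn
    exact (hTc.pow q).mul (ContinuousOn.inv₀
      (continuousOn_const.sub ((continuousOn_const.mul continuousOn_id).mul (hTc.pow q)))
      hne)
  -- compact piece
  have hScomp : IsCompact (Metric.closedBall (0:ℂ) 1 ∩ closure (sector ε)) :=
    (isCompact_closedBall 0 1).inter_right isClosed_closure
  have hSsub : Metric.closedBall (0:ℂ) 1 ∩ closure (sector ε) ⊆ cutPlane p :=
    Set.Subset.trans Set.inter_subset_right hclos
  obtain ⟨M, hM⟩ := hScomp.exists_bound_of_continuousOn (hcont.mono hSsub)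
  have hK : (0:ℝ) < 2 * max M 12 := by
    have := le_max_right M 12
    linarith
  refine ⟨2 * max M 12, hK, ?_⟩
  intro z hz
  have hzc : z ∈ cutPlane p := hsec hz
  by_cases h1 : ‖z‖ ≤ 1
  · -- small z : compactness bound
    have hzS : z ∈ Metric.closedBall (0:ℂ) 1 ∩ closure (sector ε) :=
      ⟨mem_closedBall_zero_iff.mpr h1, subset_closure hz⟩
    have hE := hM z hzS
    rw [le_div_iff₀ (by positivity : (0:ℝ) < 1 + ‖z‖)]
    nlinarith [norm_nonneg (T z ^ q * (1 - (p:ℂ) * z * T z ^ q)⁻¹),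
      le_max_left M 12, norm_nonneg z]
  · -- large z
    push_neg at h1
    have hz1 : (1:ℝ) ≤ ‖z‖ := h1.le
    set w := T z with hw
    have hw0 : w ≠ 0 := hT0 z hzc
    have hd : (1 - (p:ℂ) * z * w ^ q) ≠ 0 := hne z hzc
    have hzw : z * w ^ p = w - 1 := by linear_combination heq z hzc
    have hzwq : z * (w ^ q * w) = w - 1 := by rw [← pow_succ, ← hpq]; exact hzw
    have hkey : (1 - (p:ℂ) * z * w ^ q) * w = (p:ℂ) - ((p:ℂ) - 1) * w := by
      linear_combination (-(p:ℂ)) * hzwq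
    have hwle : ‖w‖ ≤ 2 := hTbound z hzc hz1
    have hDb := hDbound z hzc hz1
    have hw0' : 0 < ‖w‖ := norm_pos_iff.mpr hw0
    have hdnorm : ‖1 - (p:ℂ) * z * w ^ q‖ * ‖w‖ = ‖(p:ℂ) - ((p:ℂ) - 1) * w‖ := by
      rw [← norm_mul, hkey]
    have hd0 : 0 < ‖1 - (p:ℂ) * z * w ^ q‖ := norm_pos_iff.mpr hd
    have hdlow : 1 / (2 * ‖w‖) ≤ ‖1 - (p:ℂ) * z * w ^ q‖ := by
      rw [div_le_iff₀ (by positivity)]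
      nlinarith
    have hinv : ‖1 - (p:ℂ) * z * w ^ q‖⁻¹ ≤ 2 * ‖w‖ := by
      have h := one_div_le_one_div_of_le (by positivity : (0:ℝ) < 1 / (2 * ‖w‖)) hdlow
      rw [one_div_one_div] at h
      rw [inv_eq_one_div]
      exact h
    have hEbound : ‖w ^ q * (1 - (p:ℂ) * z * w ^ q)⁻¹‖ ≤ 2 * ‖w‖ ^ p := by
      rw [norm_mul, norm_inv, norm_pow]
      calc ‖w‖ ^ q * ‖1 - (p:ℂ) * z * w ^ q‖⁻¹ ≤ ‖w‖ ^ q * (2 * ‖w‖) :=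
            mul_le_mul_of_nonneg_left hinv (by positivity)
        _ = 2 * ‖w‖ ^ p := by rw [hpq, pow_succ]; ring
    have hnormeq : ‖z‖ * ‖w‖ ^ p = ‖w - 1‖ := by
      rw [← norm_pow, ← norm_mul, hzw]
    have hw13 : ‖w - 1‖ ≤ 3 := by
      calc ‖w - 1‖ ≤ ‖w‖ + ‖(1:ℂ)‖ := norm_sub_le _ _
        _ ≤ 3 := by rw [norm_one]; linarith
    have hwp : ‖w‖ ^ p ≤ 3 / ‖z‖ := by
      rw [le_div_iff₀ (by linarith : (0:ℝ) < ‖z‖)]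
      nlinarith
    calc ‖w ^ q * (1 - (p:ℂ) * z * w ^ q)⁻¹‖ ≤ 2 * ‖w‖ ^ p := hEbound
      _ ≤ 2 * (3 / ‖z‖) := by linarith
      _ = 6 / ‖z‖ := by ring
      _ ≤ 12 / (1 + ‖z‖) := by
          rw [div_le_div_iff₀ (by linarith) (by positivity)]
          linarith
      _ ≤ 2 * max M 12 / (1 + ‖z‖) := by
          gcongr
          linarith [le_max_right M 12]
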